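/- Let F be an intersecting family of k-subsets of a vertex set V, let F' ⊆ F be a subfamily, and suppose f ∈ F' and v ∉ f. If every (k−2)-subset W of V \ V(F') satisfies d_F(W) ≥ n − k + 1 where n = |V| and n − k + 1 > k, and |V \ V(F')| ≥ k − 2, then not every size-two vertex cover of F' contains v. Equivalently: if every size-two vertex cover of F' contains v and |V(F')| ≤ n − k + 2, then v belongs to every member of F' — in particular any edge e ∈ F' contains v. -/

import Mathlib

/-- If every size-two vertex cover of F' contains v, V(F') is not too large, and
(k−2)-subsets outside V(F') have large degree in F, then v lies in every member
of F'. -/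
theorem stmt16 (n k : ℕ)
    (F F' : Finset (Finset (Fin n)))
    (hcard : ∀ e ∈ F, e.card = k)
    (hint : ∀ A ∈ F, ∀ B ∈ F, (A ∩ B).Nonempty)
    (hF' : F' ⊆ F)
    (v : Fin n)
    (hbig : n - k + 1 > k)
    (hroom : k - 2 ≤ (Finset.univ \ F'.sup id : Finset (Fin n)).card)
    (hsmall : (F'.sup id).card ≤ n - k + 2)
    (hdeg : ∀ W : Finset (Fin n), W ⊆ Finset.univ \ F'.sup id → W.card = k - 2 →
      (F.filter (fun e => W ⊆ e)).card ≥ n - k + 1)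
    (hcov : ∀ T : Finset (Fin n), T.card = 2 → (∀ g ∈ F', (T ∩ g).Nonempty) → v ∈ T) :
    ∀ g ∈ F', v ∈ g := by
  intro g hg
  by_contra hvg
  have hgF := hF' hg
  have hgk := hcard g hgF
  have hgne : g.Nonempty := by
    obtain ⟨x, hx⟩ := hint g hgF g hgF
    exact ⟨x, (Finset.mem_inter.1 hx).1⟩
  have hk1 : 1 ≤ k := hgk ▸ Finset.card_pos.2 hgne
  -- disjointness of anything outside V(F') from members of F'
  have hdisj : ∀ W : Finset (Fin n), W ⊆ Finset.univ \ F'.sup id →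
      ∀ g' ∈ F', Disjoint W g' := by
    intro W hW g' hg'
    rw [Finset.disjoint_left]
    intro a haW hag'
    have := (Finset.mem_sdiff.1 (hW haW)).2
    exact this (Finset.le_sup (f := id) hg' hag')
  rcases Nat.lt_or_ge k 2 with hk2 | hk2
  · -- k = 1 case
    interval_cases k
    have hd := hdeg ∅ (Finset.empty_subset _) rfl
    rw [Finset.filter_true_of_mem (fun e _ => Finset.empty_subset e)] at hd
    have hF2 : 1 < F.card := lt_of_lt_of_le hbig hd
    obtain ⟨e₁, he₁, e₂, he₂, hne⟩ := Finset.one_lt_card.1 hF2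
    have h12 := hint e₁ he₁ e₂ he₂
    have hc1 := hcard e₁ he₁
    have hc2 := hcard e₂ he₂
    have : e₁ ∩ e₂ = e₁ := Finset.eq_of_subset_of_card_le (Finset.inter_subset_left)
      (by rw [hc1]; exact Finset.card_pos.2 h12)
    have : e₁ ∩ e₂ = e₂ := Finset.eq_of_subset_of_card_le (Finset.inter_subset_right)
      (by rw [hc2]; exact Finset.card_pos.2 h12)
    exact hne (by rw [← ‹e₁ ∩ e₂ = e₁›, ‹e₁ ∩ e₂ = e₂›])
  · -- main case k ≥ 2
    obtain ⟨W, hWsub, hWcard⟩ := Finset.exists_subset_card_eq hroom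
    have hd := hdeg W hWsub hWcard
    have hsub : F.filter (fun e => W ⊆ e) ⊆ g.image (fun x => insert v (insert x W)) := by
      intro e he
      rw [Finset.mem_filter] at he
      obtain ⟨heF, hWe⟩ := he
      -- e \ W has card 2
      have hcardeW : (e \ W).card = 2 := by
        rw [Finset.card_sdiff_of_subset hWe, hcard e heF, hWcard]
        omega
      -- e \ W covers F'
      have hcover : ∀ g' ∈ F', ((e \ W) ∩ g').Nonempty := by
        intro g' hg'
        obtain ⟨x, hx⟩ := hint e heF g' (hF' hg')
        rw [Finset.mem_inter] at hx
        refine ⟨x, Finset.mem_inter.2 ⟨Finset.mem_sdiff.2 ⟨hx.1, ?_⟩, hx.2⟩⟩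
        exact fun hxW => Finset.disjoint_left.1 (hdisj W hWsub g' hg') hxW hx.2
      have hvT : v ∈ e \ W := hcov _ hcardeW hcover
      obtain ⟨x, hx⟩ := hcover g hg
      rw [Finset.mem_inter] at hx
      have hxv : x ≠ v := fun h => hvg (h ▸ hx.2)
      -- e \ W = {v, x}
      have hTeq : e \ W = {v, x} := by
        apply Finset.eq_of_subset_of_card_le
        · intro y hy
          simp only [Finset.mem_insert, Finset.mem_singleton]
          by_contra hcon
          push_neg at hcon
          have h3 : ({v, x, y} : Finset (Fin n)) ⊆ e \ W := by
            intro z hz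
            simp only [Finset.mem_insert, Finset.mem_singleton] at hz
            rcases hz with rfl | rfl | rfl
            · exact hvT
            · exact hx.1
            · exact hy
          have : ({v, x, y} : Finset (Fin n)).card = 3 := by
            rw [Finset.card_insert_of_notMem, Finset.card_insert_of_notMem,
              Finset.card_singleton]
            · simp only [Finset.mem_singleton]
              exact fun h => hcon.2 h.symm
            · simp only [Finset.mem_insert, Finset.mem_singleton]
              push_neg
              exact ⟨Ne.symm hxv, fun h => hcon.1 h.symm⟩
          have := Finset.card_le_card h3
          omega
        · rw [hcardeW]
          rw [Finset.card_insert_of_notMem (by simp [hxv.symm, Ne.symm hxv]),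
            Finset.card_singleton]
      refine Finset.mem_image.2 ⟨x, hx.2, ?_⟩
      have : e = (e \ W) ∪ W := by
        rw [Finset.sdiff_union_of_subset hWe]
      rw [hTeq] at this
      rw [this]
      ext z
      simp [Finset.mem_insert, Finset.mem_union, or_assoc]
    have hle : (F.filter (fun e => W ⊆ e)).card ≤ k := by
      calc (F.filter (fun e => W ⊆ e)).card ≤ (g.image _).card := Finset.card_le_card hsub
        _ ≤ g.card := Finset.card_image_le
        _ = k := hgk
    omega
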